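/- Let n ≥ 1. In ℤⁿ with standard basis e₁,…,eₙ, let M be the group of signed permutation automorphisms, i.e. ℤ-linear automorphisms of the form e_i ↦ λ_i e_{π(i)} with π a permutation of {1,…,n} and each λ_i ∈ {1,−1}. Call an element of M a reflection if it is one of: t_i (sending e_i to −e_i and fixing e_ℓ for ℓ ≠ i), s_{ij} for i ≠ j (exchanging e_i and e_j and fixing the other basis vectors), or s'_{ij} for i ≠ j (sending e_i to −e_j and e_j to −e_i and fixing the other basis vectors). Suppose W is a subgroup of M which is generated by the reflections it contains and which acts transitively on the set {e₁,…,eₙ,−e₁,…,−eₙ}. Then W = M, or W equals the index-2 subgroup M⁺ of M consisting of the elements whose sign vector satisfies ∏ᵢ λᵢ = 1. -/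

import Mathlib

/-- The standard basis vector `e i` of `ℤⁿ`. -/
def sgnE (n : ℕ) (i : Fin n) : Fin n → ℤ := Pi.single i 1

/-- An automorphism of `ℤⁿ` is a signed permutation if it sends each `e i` to
`λ i • e (π i)` for some permutation `π` and signs `λ i ∈ {1, -1}`. -/
def IsSignedPerm {n : ℕ} (f : (Fin n → ℤ) ≃ₗ[ℤ] (Fin n → ℤ)) : Prop :=
  ∃ (π : Equiv.Perm (Fin n)) (lam : Fin n → ℤ),
    (∀ i, lam i = 1 ∨ lam i = -1) ∧ ∀ i, f (sgnE n i) = lam i • sgnE n (π i)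

/-- A signed permutation automorphism whose sign vector has product `1`
(an element of the Weyl group of type `Dₙ`). -/
def IsSignedPermPos {n : ℕ} (f : (Fin n → ℤ) ≃ₗ[ℤ] (Fin n → ℤ)) : Prop :=
  ∃ (π : Equiv.Perm (Fin n)) (lam : Fin n → ℤ),
    (∀ i, lam i = 1 ∨ lam i = -1) ∧ (∀ i, f (sgnE n i) = lam i • sgnE n (π i)) ∧
      ∏ i, lam i = 1

/-- The reflections among signed permutations: the `t i` (sending `e i` to `-e i` and
fixing the other basis vectors), the `s i j` (exchanging `e i` and `e j`), and the
`s' i j` (sending `e i` to `-e j`, `e j` to `-e i`). -/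
def IsSgnReflection {n : ℕ} (f : (Fin n → ℤ) ≃ₗ[ℤ] (Fin n → ℤ)) : Prop :=
  (∃ i, f (sgnE n i) = -(sgnE n i) ∧ ∀ l, l ≠ i → f (sgnE n l) = sgnE n l) ∨
  (∃ i j, i ≠ j ∧ f (sgnE n i) = sgnE n j ∧ f (sgnE n j) = sgnE n i ∧
    ∀ l, l ≠ i → l ≠ j → f (sgnE n l) = sgnE n l) ∨
  (∃ i j, i ≠ j ∧ f (sgnE n i) = -(sgnE n j) ∧ f (sgnE n j) = -(sgnE n i) ∧
    ∀ l, l ≠ i → l ≠ j → f (sgnE n l) = sgnE n l)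

namespace SgnAux

abbrev Gn (n : ℕ) := (Fin n → ℤ) ≃ₗ[ℤ] (Fin n → ℤ)

variable {n : ℕ}

lemma mul_apply (f g : Gn n) (v : Fin n → ℤ) : (f * g) v = f (g v) := rfl

lemma ext_e {f g : Gn n} (h : ∀ i, f (sgnE n i) = g (sgnE n i)) : f = g := by
  apply LinearEquiv.toLinearMap_injective
  apply Module.Basis.ext (Pi.basisFun ℤ (Fin n))
  intro i
  simpa [sgnE] using h i

lemma smul_e_inj {c d : ℤ} {j k : Fin n} (hc : c ≠ 0)
    (h : c • sgnE n j = d • sgnE n k) : j = k ∧ c = d := by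
  have hj := congrFun h j
  simp [sgnE, Pi.single_apply] at hj
  by_cases hjk : j = k
  · subst hjk; simp at hj; exact ⟨rfl, hj⟩
  · rw [if_neg hjk] at hj
    exact absurd hj hc

/-- the signed permutation automorphism -/
def sp (π : Equiv.Perm (Fin n)) (u : Fin n → ℤˣ) : Gn n where
  toFun v := fun j => (u (π.symm j) : ℤ) * v (π.symm j)
  invFun v := fun i => (u i : ℤ) * v (π i)
  map_add' v w := by funext j; simp [mul_add]
  map_smul' c v := by funext j; simp [smul_eq_mul]; ring
  left_inv v := by
    funext i
    simp only [Equiv.symm_apply_apply, ← mul_assoc]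
    norm_cast
    rw [Int.units_mul_self]; simp
  right_inv v := by
    funext j
    simp only [Equiv.apply_symm_apply, ← mul_assoc]
    norm_cast
    rw [Int.units_mul_self]; simp

lemma sp_apply_e (π : Equiv.Perm (Fin n)) (u : Fin n → ℤˣ) (i : Fin n) :
    sp π u (sgnE n i) = (u i : ℤ) • sgnE n (π i) := by
  funext j
  show (u (π.symm j) : ℤ) * (Pi.single i 1 : Fin n → ℤ) (π.symm j) = _
  simp only [sgnE, Pi.smul_apply, smul_eq_mul, Pi.single_apply]
  by_cases hj : j = π i
  · subst hj; simp
  · rw [if_neg (fun h => hj (by rw [← h]; simp)), if_neg hj, mul_zero, mul_zero]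

lemma sp_mul (π σ : Equiv.Perm (Fin n)) (u v : Fin n → ℤˣ) :
    sp π u * sp σ v = sp (π * σ) (fun i => v i * u (σ i)) := by
  apply ext_e
  intro i
  rw [mul_apply, sp_apply_e, map_smul, sp_apply_e, sp_apply_e, smul_smul]
  push_cast
  simp

lemma sp_one : sp (1 : Equiv.Perm (Fin n)) 1 = 1 := by
  apply ext_e; intro i; rw [sp_apply_e]; simp

lemma sp_inv (π : Equiv.Perm (Fin n)) (u : Fin n → ℤˣ) :
    (sp π u)⁻¹ = sp π⁻¹ (fun j => u (π⁻¹ j)) := by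
  apply inv_eq_of_mul_eq_one_right
  rw [sp_mul, mul_inv_cancel]
  convert sp_one using 2
  funext i
  simp [Int.units_mul_self]

/-- `swapR a b ε`: for `a = b, ε = -1` this is `t a`; for `a ≠ b` it is `s a b` (ε = 1)
or `s' a b` (ε = -1). -/
def swapR (a b : Fin n) (ε : ℤˣ) : Gn n :=
  sp (Equiv.swap a b) (fun l => if l = a ∨ l = b then ε else 1)

lemma swapR_comm (a b : Fin n) (ε : ℤˣ) : swapR a b ε = swapR b a ε := by
  unfold swapR
  rw [Equiv.swap_comm]
  congr 1
  funext l
  simp [or_comm]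

lemma swapR_apply_left (a b : Fin n) (ε : ℤˣ) :
    swapR a b ε (sgnE n a) = (ε : ℤ) • sgnE n b := by
  unfold swapR
  rw [sp_apply_e]
  simp

lemma swapR_apply_right (a b : Fin n) (ε : ℤˣ) :
    swapR a b ε (sgnE n b) = (ε : ℤ) • sgnE n a := by
  rw [swapR_comm, swapR_apply_left]

lemma swapR_apply_other (a b l : Fin n) (ε : ℤˣ) (hla : l ≠ a) (hlb : l ≠ b) :
    swapR a b ε (sgnE n l) = sgnE n l := by
  unfold swapR
  rw [sp_apply_e]
  rw [if_neg (by tauto), Equiv.swap_apply_of_ne_of_ne hla hlb]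
  simp

/-- conjugation master lemma -/
lemma conj_swapR (π : Equiv.Perm (Fin n)) (u : Fin n → ℤˣ) (a b : Fin n) (ε : ℤˣ) :
    sp π u * swapR a b ε * (sp π u)⁻¹ = swapR (π a) (π b) (ε * u a * u b) := by
  unfold swapR
  rw [sp_inv, sp_mul, sp_mul]
  have hperm : π * Equiv.swap a b * π⁻¹ = Equiv.swap (π a) (π b) :=
    (Equiv.swap_apply_apply π a b).symm
  rw [show (π * Equiv.swap a b) * π⁻¹ = Equiv.swap (π a) (π b) from hperm]
  congr 1
  funext i
  by_cases hia : π⁻¹ i = a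
  · have : i = π a := by rw [← hia]; simp
    subst this
    simp only [hia, Equiv.swap_apply_left, true_or, if_true]
    rw [mul_left_comm, ← mul_assoc]
  · by_cases hib : π⁻¹ i = b
    · have : i = π b := by rw [← hib]; simp
      subst this
      simp only [hib, Equiv.swap_apply_right, or_true, if_true]
      rw [mul_left_comm, mul_comm (u b) (u a), ← mul_assoc]
    · have h1 : ¬(i = π a ∨ i = π b) := by
        rintro (h | h) <;> [exact hia (by rw [h]; simp); exact hib (by rw [h]; simp)]
      rw [if_neg h1, if_neg (by tauto), Equiv.swap_apply_of_ne_of_ne hia hib]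
      rw [one_mul, Int.units_mul_self]

lemma units_coe_cases (u : ℤˣ) : (u : ℤ) = 1 ∨ (u : ℤ) = -1 := by
  rcases Int.units_eq_one_or u with h | h <;> [left; right] <;> rw [h] <;> rfl

lemma isSignedPerm_iff {f : Gn n} :
    IsSignedPerm f ↔ ∃ π u, f = sp π u := by
  constructor
  · rintro ⟨π, lam, hpm, happ⟩
    refine ⟨π, fun i => if lam i = 1 then 1 else -1, ext_e fun i => ?_⟩
    rw [happ i, sp_apply_e]
    rcases hpm i with h | h <;> simp [h]
  · rintro ⟨π, u, rfl⟩
    exact ⟨π, fun i => (u i : ℤ), fun i => units_coe_cases (u i), fun i => sp_apply_e π u i⟩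

lemma prod_units_coe (u : Fin n → ℤˣ) : (∏ i, (u i : ℤ)) = ((∏ i, u i : ℤˣ) : ℤ) := by
  exact (map_prod (Units.coeHom ℤ) u Finset.univ).symm

lemma isSignedPermPos_iff {f : Gn n} :
    IsSignedPermPos f ↔ ∃ π u, f = sp π u ∧ (∏ i, u i) = 1 := by
  constructor
  · rintro ⟨π, lam, hpm, happ, hprod⟩
    set u : Fin n → ℤˣ := fun i => if lam i = 1 then 1 else -1 with hu
    have hcoe : ∀ i, (u i : ℤ) = lam i := by
      intro i; rcases hpm i with h | h <;> simp [hu, h]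
    refine ⟨π, u, ext_e fun i => ?_, ?_⟩
    · rw [happ i, sp_apply_e, hcoe]
    · apply Units.ext
      rw [← prod_units_coe]
      push_cast
      rw [Finset.prod_congr rfl (fun i _ => hcoe i), hprod]
  · rintro ⟨π, u, rfl, hprod⟩
    refine ⟨π, fun i => (u i : ℤ), fun i => units_coe_cases (u i),
      fun i => sp_apply_e π u i, ?_⟩
    rw [prod_units_coe, hprod]; rfl

lemma reflection_classify {f : Gn n} (h : IsSgnReflection f) :
    (∃ i, f = swapR i i (-1)) ∨
    (∃ i j, i ≠ j ∧ (f = swapR i j 1 ∨ f = swapR i j (-1))) := by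
  rcases h with ⟨i, h1, h2⟩ | ⟨i, j, hij, h1, h2, h3⟩ | ⟨i, j, hij, h1, h2, h3⟩
  · left
    refine ⟨i, ext_e fun l => ?_⟩
    by_cases hl : l = i
    · subst hl
      rw [h1, swapR_apply_left]
      simp
    · rw [h2 l hl, swapR_apply_other i i l (-1) hl hl]
  · right
    refine ⟨i, j, hij, Or.inl (ext_e fun l => ?_)⟩
    by_cases hli : l = i
    · subst hli; rw [h1, swapR_apply_left]; simp
    · by_cases hlj : l = j
      · subst hlj; rw [h2, swapR_apply_right]; simp
      · rw [h3 l hli hlj, swapR_apply_other i j l 1 hli hlj]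
  · right
    refine ⟨i, j, hij, Or.inr (ext_e fun l => ?_)⟩
    by_cases hli : l = i
    · subst hli; rw [h1, swapR_apply_left]; simp
    · by_cases hlj : l = j
      · subst hlj; rw [h2, swapR_apply_right]; simp
      · rw [h3 l hli hlj, swapR_apply_other i j l (-1) hli hlj]
lemma sp_diag_mul (u v : Fin n → ℤˣ) : sp 1 (u * v) = sp 1 u * sp 1 v := by
  rw [sp_mul, one_mul]
  congr 1
  funext i
  exact mul_comm (u i) (v i)

lemma swapR_one_eq (a b : Fin n) : swapR a b 1 = sp (Equiv.swap a b) 1 := by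
  unfold swapR; congr 1; funext l; split <;> rfl

lemma sp_perm_mem (W : Subgroup (Gn n)) (hS : ∀ a b : Fin n, a ≠ b → swapR a b 1 ∈ W)
    (π : Equiv.Perm (Fin n)) : sp π 1 ∈ W := by
  refine Equiv.Perm.swap_induction_on π ?_ ?_
  · rw [sp_one]; exact one_mem W
  · intro f x y hxy ih
    have : sp (Equiv.swap x y) 1 * sp f 1 = sp (Equiv.swap x y * f) 1 := by
      rw [sp_mul]; congr 1
    rw [← this]
    exact mul_mem (swapR_one_eq x y ▸ hS x y hxy) ih

lemma sp_prod_mem (W : Subgroup (Gn n)) (s : Finset (Fin n)) (ν : Fin n → (Fin n → ℤˣ))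
    (h : ∀ i ∈ s, sp 1 (ν i) ∈ W) : sp 1 (∏ i ∈ s, ν i) ∈ W := by
  classical
  induction s using Finset.induction_on with
  | empty => rw [Finset.prod_empty, sp_one]; exact one_mem W
  | insert _ _ ha ih =>
    rename_i a s
    rw [Finset.prod_insert ha, sp_diag_mul]
    exact mul_mem (h a (Finset.mem_insert_self a s))
      (ih fun i hi => h i (Finset.mem_insert_of_mem hi))

/-- decomposition of a signed permutation into diagonal and permutation part -/
lemma sp_decomp (π : Equiv.Perm (Fin n)) (u : Fin n → ℤˣ) :
    sp π u = sp 1 (fun j => u (π⁻¹ j)) * sp π 1 := by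
  rw [sp_mul, one_mul]
  congr 1
  funext i
  simp

lemma sp_diag_mem_A (W : Subgroup (Gn n)) (hT : ∀ i : Fin n, swapR i i (-1) ∈ W)
    (u : Fin n → ℤˣ) : sp 1 u ∈ W := by
  classical
  have hT' : ∀ i : Fin n, sp 1 (fun l => if l = i then -1 else 1) ∈ W := by
    intro i
    have h := hT i
    unfold swapR at h
    rw [Equiv.swap_self] at h
    rw [show (Equiv.refl (Fin n)) = 1 from rfl] at h
    convert h using 2
    funext l
    simp
  have key : u = ∏ i ∈ Finset.univ.filter (fun i => u i = -1),
      (fun l => if l = i then (-1 : ℤˣ) else 1) := by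
    funext l
    rw [Finset.prod_apply, Finset.prod_ite_eq]
    rcases Int.units_eq_one_or (u l) with h | h <;> simp [h, Finset.mem_filter]
  rw [key]
  exact sp_prod_mem W _ _ fun i _ => hT' i

lemma genA (W : Subgroup (Gn n)) (hT : ∀ i : Fin n, swapR i i (-1) ∈ W)
    (hS : ∀ a b : Fin n, a ≠ b → swapR a b 1 ∈ W) (π : Equiv.Perm (Fin n))
    (u : Fin n → ℤˣ) : sp π u ∈ W := by
  rw [sp_decomp]
  exact mul_mem (sp_diag_mem_A W hT _) (sp_perm_mem W hS π)

lemma diag_pair_mem (W : Subgroup (Gn n)) {i j : Fin n} (hij : i ≠ j)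
    (h1 : swapR i j 1 ∈ W) (h2 : swapR i j (-1) ∈ W) :
    sp 1 (fun l => if l = i ∨ l = j then -1 else 1) ∈ W := by
  have h := mul_mem h2 h1
  unfold swapR at h
  rw [sp_mul, Equiv.swap_mul_self] at h
  convert h using 2
  funext l
  by_cases hl : l = i ∨ l = j
  · have hswap : Equiv.swap i j l = i ∨ Equiv.swap i j l = j := by
      rcases hl with rfl | rfl
      · right; exact Equiv.swap_apply_left l j
      · left; exact Equiv.swap_apply_right i l
    rw [if_pos hl, if_pos hl, if_pos hswap, one_mul]
  · have hswap : ¬(Equiv.swap i j l = i ∨ Equiv.swap i j l = j) := by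
      rw [Equiv.swap_apply_of_ne_of_ne (fun h' => hl (Or.inl h')) (fun h' => hl (Or.inr h'))]
      exact hl
    rw [if_neg hl, if_neg hl, if_neg hswap, one_mul]

lemma sp_diag_mem_B (W : Subgroup (Gn n)) (hn : 0 < n)
    (hFull : ∀ a b : Fin n, a ≠ b → swapR a b 1 ∈ W ∧ swapR a b (-1) ∈ W)
    (u : Fin n → ℤˣ) (hu : ∏ i, u i = 1) : sp 1 u ∈ W := by
  classical
  set i0 : Fin n := ⟨0, hn⟩ with hi0
  set ν : Fin n → (Fin n → ℤˣ) :=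
    fun i l => (if l = i then (-1:ℤˣ) else 1) * (if l = i0 then -1 else 1) with hν
  have hD : ∀ i : Fin n, sp 1 (ν i) ∈ W := by
    intro i
    by_cases hi : i = i0
    · have h0 : ν i0 = 1 := funext fun l => by by_cases h : l = i0 <;> simp [hν, h]
      rw [hi, h0, sp_one]
      exact one_mem W
    · have h := diag_pair_mem W hi (hFull i i0 hi).1 (hFull i i0 hi).2
      convert h using 2
      funext l
      show (if l = i then (-1:ℤˣ) else 1) * (if l = i0 then -1 else 1) = _
      by_cases h1 : l = i
      · rw [h1, if_pos rfl, if_pos (Or.inl rfl), if_neg (h1 ▸ hi)]; rfl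
      · by_cases h2 : l = i0
        · rw [if_neg h1, if_pos h2, if_pos (Or.inr h2), one_mul]
        · rw [if_neg h1, if_neg h2, if_neg (by tauto), one_mul]
  set S : Finset (Fin n) := Finset.univ.filter (fun i => u i = -1) with hs
  have hSeven : Even S.card := by
    have hsplit := Finset.prod_filter_mul_prod_filter_not Finset.univ (fun i => u i = -1) u
    have h1 : ∏ i ∈ S, u i = (-1 : ℤˣ) ^ S.card := by
      rw [Finset.prod_congr rfl (fun i hi => (Finset.mem_filter.mp hi).2)]
      exact Finset.prod_const _
    have h2 : ∏ i ∈ Finset.univ.filter (fun i => ¬u i = -1), u i = 1 := by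
      apply Finset.prod_eq_one
      intro i hi
      rcases Int.units_eq_one_or (u i) with h | h
      · exact h
      · exact absurd h (Finset.mem_filter.mp hi).2
    rw [← hs] at hsplit
    rw [h1, h2, mul_one, hu] at hsplit
    exact (neg_one_pow_eq_one_iff_even (by decide : (-1:ℤˣ) ≠ 1)).mp hsplit
  have key : u = ∏ i ∈ S, ν i := by
    funext l
    rw [Finset.prod_apply]
    have expand : ∀ i ∈ S, ν i l = (if l = i then (-1:ℤˣ) else 1) * (if l = i0 then -1 else 1) :=
      fun i _ => rfl
    rw [Finset.prod_congr rfl expand, Finset.prod_mul_distrib]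
    have h2 : (∏ _i ∈ S, if l = i0 then (-1:ℤˣ) else 1) = 1 := by
      by_cases h : l = i0
      · rw [Finset.prod_congr rfl (fun i _ => if_pos h), Finset.prod_const]
        exact Even.neg_one_pow hSeven
      · rw [Finset.prod_congr rfl (fun i _ => if_neg h), Finset.prod_const, one_pow]
    rw [h2, mul_one, Finset.prod_ite_eq]
    rcases Int.units_eq_one_or (u l) with h | h <;> simp [hs, h, Finset.mem_filter]
  rw [key]
  exact sp_prod_mem W _ _ fun i _ => hD i

lemma genB (W : Subgroup (Gn n)) (hn : 0 < n)
    (hFull : ∀ a b : Fin n, a ≠ b → swapR a b 1 ∈ W ∧ swapR a b (-1) ∈ W)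
    (π : Equiv.Perm (Fin n)) (u : Fin n → ℤˣ) (hu : ∏ i, u i = 1) : sp π u ∈ W := by
  rw [sp_decomp]
  refine mul_mem (sp_diag_mem_B W hn hFull _ ?_)
    (sp_perm_mem W (fun a b hab => (hFull a b hab).1) π)
  rw [Equiv.prod_comp π⁻¹ u]
  exact hu

/-! ### The combinatorial core -/

section Main

variable {W : Subgroup (Gn n)}

/-- conjugation of a `swapR` by a `swapR`, fully in terms of `swapR`. -/
lemma conj_swapR' (a b c d : Fin n) (ε θ : ℤˣ) :
    swapR c d θ * swapR a b ε * (swapR c d θ)⁻¹ =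
      swapR (Equiv.swap c d a) (Equiv.swap c d b)
        (ε * (if a = c ∨ a = d then θ else 1) * (if b = c ∨ b = d then θ else 1)) := by
  show sp (Equiv.swap c d) _ * swapR a b ε * (sp (Equiv.swap c d) _)⁻¹ = _
  rw [conj_swapR]

/-- The relation `i = j` or some swap-type reflection between `i` and `j` lies in `W`. -/
def Rel (W : Subgroup (Gn n)) (i j : Fin n) : Prop :=
  i = j ∨ ∃ ε, swapR i j ε ∈ W

lemma rel_refl (i : Fin n) : Rel W i i := Or.inl rfl

lemma rel_symm {i j : Fin n} (h : Rel W i j) : Rel W j i := by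
  rcases h with rfl | ⟨ε, hε⟩
  · exact Or.inl rfl
  · exact Or.inr ⟨ε, swapR_comm i j ε ▸ hε⟩

lemma rel_trans {i j k : Fin n} (h1 : Rel W i j) (h2 : Rel W j k) : Rel W i k := by
  rcases h1 with rfl | ⟨ε₁, hε₁⟩
  · exact h2
  rcases h2 with rfl | ⟨ε₂, hε₂⟩
  · exact Or.inr ⟨ε₁, hε₁⟩
  by_cases hik : i = k
  · exact Or.inl hik
  by_cases hij : i = j
  · subst hij; exact Or.inr ⟨ε₂, hε₂⟩
  have h3 := conj_swapR' i j j k ε₁ ε₂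
  rw [Equiv.swap_apply_of_ne_of_ne hij hik, Equiv.swap_apply_left,
    if_neg (by tauto), if_pos (Or.inl rfl), mul_one] at h3
  exact Or.inr ⟨ε₁ * ε₂, h3 ▸ mul_mem (mul_mem hε₂ hε₁) (inv_mem hε₂)⟩

lemma w_form (hsub : ∀ f ∈ W, IsSignedPerm f) {f : Gn n} (hf : f ∈ W) :
    ∃ π u, f = sp π u := isSignedPerm_iff.mp (hsub f hf)

lemma invariant1 (hsub : ∀ f ∈ W, IsSignedPerm f)
    (hgen : W = Subgroup.closure {f | f ∈ W ∧ IsSgnReflection f}) :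
    ∀ w ∈ W, ∀ i, ∃ j, ∃ c : ℤˣ, Rel W i j ∧ w (sgnE n i) = (c : ℤ) • sgnE n j := by
  intro w hw
  rw [hgen] at hw
  refine Subgroup.closure_induction ?_ ?_ ?_ ?_ hw
  · rintro r ⟨hrW, hrR⟩ i
    rcases reflection_classify hrR with ⟨a, rfl⟩ | ⟨a, b, hab, hr⟩
    · by_cases hia : i = a
      · subst hia
        exact ⟨i, -1, rel_refl i, swapR_apply_left i i (-1)⟩
      · exact ⟨i, 1, rel_refl i, by
          rw [swapR_apply_other a a i (-1) hia hia]; simp⟩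
    · have hmem : ∀ ε', swapR a b ε' = swapR a b ε' → True := fun _ _ => trivial
      rcases hr with rfl | rfl
      · by_cases hia : i = a
        · subst hia
          exact ⟨b, 1, Or.inr ⟨1, hrW⟩, swapR_apply_left i b 1⟩
        · by_cases hib : i = b
          · subst hib
            exact ⟨a, 1, rel_symm (Or.inr ⟨1, hrW⟩), swapR_apply_right a i 1⟩
          · exact ⟨i, 1, rel_refl i, by
              rw [swapR_apply_other a b i 1 hia hib]; simp⟩
      · by_cases hia : i = a
        · subst hia
          exact ⟨b, -1, Or.inr ⟨-1, hrW⟩, swapR_apply_left i b (-1)⟩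
        · by_cases hib : i = b
          · subst hib
            exact ⟨a, -1, rel_symm (Or.inr ⟨-1, hrW⟩), swapR_apply_right a i (-1)⟩
          · exact ⟨i, 1, rel_refl i, by
              rw [swapR_apply_other a b i (-1) hia hib]; simp⟩
  · intro i
    exact ⟨i, 1, rel_refl i, by simp⟩
  · intro x y hx hy ihx ihy i
    obtain ⟨j, c, hrel1, h1⟩ := ihy i
    obtain ⟨k, d, hrel2, h2⟩ := ihx j
    refine ⟨k, d * c, rel_trans hrel1 hrel2, ?_⟩
    rw [mul_apply, h1, map_smul, h2, smul_smul]
    push_cast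
    ring_nf
  · intro x hx ih
    rw [← hgen] at hx
    obtain ⟨π, u, rfl⟩ := w_form hsub hx
    intro i
    obtain ⟨k, c, hrel, heq⟩ := ih (π⁻¹ i)
    rw [sp_apply_e, (by exact Equiv.apply_symm_apply π i : π (π⁻¹ i) = i)] at heq
    obtain ⟨rfl, hc⟩ := smul_e_inj (by exact_mod_cast (u (π⁻¹ i)).ne_zero) heq
    refine ⟨π⁻¹ i, u (π⁻¹ i), rel_symm hrel, ?_⟩
    rw [sp_inv, sp_apply_e]

lemma e_mem_set (i : Fin n) :
    sgnE n i ∈ {v : Fin n → ℤ | ∃ i, v = sgnE n i ∨ v = -(sgnE n i)} := ⟨i, Or.inl rfl⟩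

lemma neg_e_mem_set (i : Fin n) :
    -(sgnE n i) ∈ {v : Fin n → ℤ | ∃ i, v = sgnE n i ∨ v = -(sgnE n i)} := ⟨i, Or.inr rfl⟩

lemma swap_exists (hsub : ∀ f ∈ W, IsSignedPerm f)
    (hgen : W = Subgroup.closure {f | f ∈ W ∧ IsSgnReflection f})
    (htrans : ∀ x ∈ {v : Fin n → ℤ | ∃ i, v = sgnE n i ∨ v = -(sgnE n i)},
      ∀ y ∈ {v : Fin n → ℤ | ∃ i, v = sgnE n i ∨ v = -(sgnE n i)},
        ∃ w ∈ W, w x = y) (i j : Fin n) (hij : i ≠ j) :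
    ∃ ε, swapR i j ε ∈ W := by
  obtain ⟨w, hw, hwx⟩ := htrans (sgnE n i) (e_mem_set i) (sgnE n j) (e_mem_set j)
  obtain ⟨k, c, hrel, heq⟩ := invariant1 hsub hgen w hw i
  rw [hwx] at heq
  have heq' : (1 : ℤ) • sgnE n j = (c : ℤ) • sgnE n k := by rw [one_smul]; exact heq
  obtain ⟨rfl, -⟩ := smul_e_inj one_ne_zero heq'
  rcases hrel with rfl | h
  · exact absurd rfl hij
  · exact h

end Main

section Final

variable {W : Subgroup (Gn n)}

/-- Case A: some `t` reflection lies in `W`; then `W` is everything. -/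
lemma caseA (hsub : ∀ f ∈ W, IsSignedPerm f)
    (hgen : W = Subgroup.closure {f | f ∈ W ∧ IsSgnReflection f})
    (htrans : ∀ x ∈ {v : Fin n → ℤ | ∃ i, v = sgnE n i ∨ v = -(sgnE n i)},
      ∀ y ∈ {v : Fin n → ℤ | ∃ i, v = sgnE n i ∨ v = -(sgnE n i)},
        ∃ w ∈ W, w x = y)
    (hTex : ∃ a, swapR a a (-1) ∈ W) :
    (W : Set (Gn n)) = {f | IsSignedPerm f} := by
  obtain ⟨a, ha⟩ := hTex
  -- all t's are in W
  have hT : ∀ i, swapR i i (-1) ∈ W := by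
    intro i
    obtain ⟨w, hw, hwx⟩ := htrans (sgnE n a) (e_mem_set a) (sgnE n i) (e_mem_set i)
    obtain ⟨π, u, rfl⟩ := w_form hsub hw
    rw [sp_apply_e] at hwx
    have hwx' : ((u a : ℤ)) • sgnE n (π a) = (1 : ℤ) • sgnE n i := by rw [one_smul]; exact hwx
    obtain ⟨hπa, -⟩ := smul_e_inj (by exact_mod_cast (u a).ne_zero) hwx'
    have hconj := conj_swapR π u a a (-1)
    rw [hπa] at hconj
    have : (-1 : ℤˣ) * u a * u a = -1 := by
      rw [mul_assoc, Int.units_mul_self, mul_one]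
    rw [this] at hconj
    exact hconj ▸ mul_mem (mul_mem hw ha) (inv_mem hw)
  -- all plain swaps are in W
  have hS : ∀ i j : Fin n, i ≠ j → swapR i j 1 ∈ W := by
    intro i j hij
    obtain ⟨ε, hε⟩ := swap_exists hsub hgen htrans i j hij
    rcases Int.units_eq_one_or ε with rfl | rfl
    · exact hε
    · have h3 := conj_swapR' i j i i (-1) (-1)
      rw [Equiv.swap_self] at h3
      rw [show Equiv.refl (Fin n) = 1 from rfl] at h3
      rw [Equiv.Perm.one_apply, Equiv.Perm.one_apply,
        if_pos (Or.inl rfl), if_neg (by tauto),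
        show ((-1 : ℤˣ) * -1 * 1 : ℤˣ) = 1 by decide] at h3
      exact h3 ▸ mul_mem (mul_mem (hT i) hε) (inv_mem (hT i))
  apply Set.eq_of_subset_of_subset
  · intro f hf
    exact hsub f hf
  · rintro f hf
    obtain ⟨π, u, rfl⟩ := isSignedPerm_iff.mp hf
    exact genA W hT hS π u

/-- In Case B with a full pair, every pair is full. -/
lemma full_everywhere (hsub : ∀ f ∈ W, IsSignedPerm f)
    (hgen : W = Subgroup.closure {f | f ∈ W ∧ IsSgnReflection f})
    (htrans : ∀ x ∈ {v : Fin n → ℤ | ∃ i, v = sgnE n i ∨ v = -(sgnE n i)},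
      ∀ y ∈ {v : Fin n → ℤ | ∃ i, v = sgnE n i ∨ v = -(sgnE n i)},
        ∃ w ∈ W, w x = y)
    {a b : Fin n} (hab : a ≠ b) (hFa : swapR a b 1 ∈ W) (hFb : swapR a b (-1) ∈ W) :
    ∀ p q : Fin n, p ≠ q → swapR p q 1 ∈ W ∧ swapR p q (-1) ∈ W := by
  have hsymm : ∀ x y : Fin n, (swapR x y 1 ∈ W ∧ swapR x y (-1) ∈ W) →
      swapR y x 1 ∈ W ∧ swapR y x (-1) ∈ W := by
    intro x y ⟨h1, h2⟩
    exact ⟨swapR_comm x y 1 ▸ h1, swapR_comm x y (-1) ▸ h2⟩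
  have F1 : ∀ x y : Fin n, x ≠ y → (swapR x y 1 ∈ W ∧ swapR x y (-1) ∈ W) →
      ∀ c, c ≠ x → c ≠ y → swapR x c 1 ∈ W ∧ swapR x c (-1) ∈ W := by
    intro x y hxy hfull c hcx hcy
    have hD := diag_pair_mem W hxy hfull.1 hfull.2
    obtain ⟨θ, hθ⟩ := swap_exists hsub hgen htrans x c (Ne.symm hcx)
    have hconj := conj_swapR 1 (fun l => if l = x ∨ l = y then (-1 : ℤˣ) else 1) x c θ
    rw [Equiv.Perm.one_apply, Equiv.Perm.one_apply, if_pos (Or.inl rfl),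
      if_neg (by tauto), mul_one, mul_neg_one] at hconj
    have hmem : swapR x c (-θ) ∈ W := hconj ▸ mul_mem (mul_mem hD hθ) (inv_mem hD)
    rcases Int.units_eq_one_or θ with rfl | rfl
    · exact ⟨hθ, hmem⟩
    · exact ⟨by rwa [show (-(-1) : ℤˣ) = 1 by decide] at hmem, hθ⟩
  intro p q hpq
  by_cases hpa : p = a
  · subst hpa
    by_cases hq : q = b
    · subst hq; exact ⟨hFa, hFb⟩
    · exact F1 p b hab ⟨hFa, hFb⟩ q (Ne.symm hpq) hq
  · by_cases hpb : p = b
    · subst hpb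
      by_cases hq : q = a
      · subst hq; exact hsymm q p ⟨hFa, hFb⟩
      · exact F1 p a (Ne.symm hab) (hsymm a p ⟨hFa, hFb⟩) q (Ne.symm hpq) hq
    · -- p ∉ {a, b}
      have hfap : swapR a p 1 ∈ W ∧ swapR a p (-1) ∈ W :=
        F1 a b hab ⟨hFa, hFb⟩ p hpa hpb
      have hfpa := hsymm a p hfap
      by_cases hq : q = a
      · subst hq; exact hfpa
      · exact F1 p a hpa hfpa q (Ne.symm hpq) hq

/-- The subgroup of positive signed permutations. -/
def posSub (n : ℕ) : Subgroup (Gn n) where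
  carrier := {f | ∃ π u, f = sp π u ∧ ∏ i, u i = 1}
  one_mem' := ⟨1, 1, sp_one.symm, by simp⟩
  mul_mem' := by
    rintro f g ⟨π, u, rfl, hu⟩ ⟨σ, v, rfl, hv⟩
    refine ⟨π * σ, fun i => v i * u (σ i), sp_mul π σ u v, ?_⟩
    rw [Finset.prod_mul_distrib, hv, one_mul, Equiv.prod_comp σ u, hu]
  inv_mem' := by
    rintro f ⟨π, u, rfl, hu⟩
    refine ⟨π⁻¹, fun j => u (π⁻¹ j), sp_inv π u, ?_⟩
    rw [Equiv.prod_comp π⁻¹ u, hu]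

lemma prod_swap_nu {i j : Fin n} (hij : i ≠ j) (ε : ℤˣ) :
    ∏ l, (if l = i ∨ l = j then ε else 1) = 1 := by
  have h : ∀ l : Fin n, (if l = i ∨ l = j then ε else 1)
      = (if l = i then ε else 1) * (if l = j then ε else 1) := by
    intro l
    by_cases h1 : l = i
    · subst h1; rw [if_pos (Or.inl rfl), if_pos rfl, if_neg hij, mul_one]
    · by_cases h2 : l = j
      · subst h2; rw [if_pos (Or.inr rfl), if_neg h1, one_mul, if_pos rfl]
      · rw [if_neg (by tauto), if_neg h1, if_neg h2, mul_one]
  rw [Finset.prod_congr rfl (fun l _ => h l), Finset.prod_mul_distrib,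
    Finset.prod_ite_eq' Finset.univ i (fun _ => ε),
    Finset.prod_ite_eq' Finset.univ j (fun _ => ε)]
  simp [Int.units_mul_self]

/-- Case B with a full pair: `W` is the positive subgroup. -/
lemma caseB (hn : 0 < n) (hsub : ∀ f ∈ W, IsSignedPerm f)
    (hgen : W = Subgroup.closure {f | f ∈ W ∧ IsSgnReflection f})
    (hTnone : ∀ a, swapR a a (-1) ∉ W)
    (hFull : ∀ p q : Fin n, p ≠ q → swapR p q 1 ∈ W ∧ swapR p q (-1) ∈ W) :
    (W : Set (Gn n)) = {f | IsSignedPermPos f} := by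
  apply Set.eq_of_subset_of_subset
  · intro f hf
    have hle : Subgroup.closure {f | f ∈ W ∧ IsSgnReflection f} ≤ posSub n := by
      rw [Subgroup.closure_le]
      rintro r ⟨hrW, hrR⟩
      rcases reflection_classify hrR with ⟨a, rfl⟩ | ⟨a, b, hab, hr⟩
      · exact absurd hrW (hTnone a)
      · rcases hr with rfl | rfl
        · exact ⟨Equiv.swap a b, _, rfl, prod_swap_nu hab 1⟩
        · exact ⟨Equiv.swap a b, _, rfl, prod_swap_nu hab (-1)⟩
    rw [hgen] at hf
    obtain ⟨π, u, rfl, hu⟩ := hle hf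
    exact isSignedPermPos_iff.mpr ⟨π, u, rfl, hu⟩
  · intro f hf
    obtain ⟨π, u, rfl, hu⟩ := isSignedPermPos_iff.mp hf
    exact genB W hn hFull π u hu

set_option maxHeartbeats 1000000 in
/-- Case B without a full pair is impossible. -/
lemma caseB_impossible (hn : 0 < n) (hsub : ∀ f ∈ W, IsSignedPerm f)
    (hgen : W = Subgroup.closure {f | f ∈ W ∧ IsSgnReflection f})
    (htrans : ∀ x ∈ {v : Fin n → ℤ | ∃ i, v = sgnE n i ∨ v = -(sgnE n i)},
      ∀ y ∈ {v : Fin n → ℤ | ∃ i, v = sgnE n i ∨ v = -(sgnE n i)},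
        ∃ w ∈ W, w x = y)
    (hTnone : ∀ a, swapR a a (-1) ∉ W)
    (hNF : ∀ a b : Fin n, a ≠ b → ¬(swapR a b 1 ∈ W ∧ swapR a b (-1) ∈ W)) : False := by
  classical
  set i0 : Fin n := ⟨0, hn⟩ with hi0
  set δ : Fin n → ℤˣ := fun i => if swapR i0 i (-1) ∈ W then -1 else 1 with hδ
  have hδi0 : δ i0 = 1 := if_neg (hTnone i0)
  have hchar : ∀ x θ, x ≠ i0 → swapR i0 x θ ∈ W → δ x = θ := by
    intro x θ hx hmem
    rcases Int.units_eq_one_or θ with rfl | rfl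
    · exact if_neg (fun hc => hNF i0 x (Ne.symm hx) ⟨hmem, hc⟩)
    · exact if_pos hmem
  have hsq : ∀ θ : ℤˣ, θ * θ = 1 := Int.units_mul_self
  have key : ∀ a b (ε : ℤˣ), a ≠ b → swapR a b ε ∈ W → δ a * δ b = ε := by
    intro a b ε hab hmem
    by_cases ha : a = i0
    · subst ha
      rw [hδi0, one_mul]
      exact hchar b ε (Ne.symm hab) hmem
    · by_cases hb : b = i0
      · subst hb
        rw [hδi0, mul_one]
        exact hchar a ε ha (swapR_comm a i0 ε ▸ hmem)
      · obtain ⟨θ, hθ⟩ := swap_exists hsub hgen htrans i0 a (Ne.symm ha)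
        have hδa : δ a = θ := hchar a θ ha hθ
        have hconj := conj_swapR' i0 a a b θ ε
        rw [Equiv.swap_apply_of_ne_of_ne (Ne.symm ha) (Ne.symm hb),
          Equiv.swap_apply_left,
          if_neg (by rintro (h | h); exacts [ha h.symm, hb h.symm]),
          if_pos (Or.inl rfl), mul_one] at hconj
        have hmem2 : swapR i0 b (θ * ε) ∈ W :=
          hconj ▸ mul_mem (mul_mem hmem hθ) (inv_mem hmem)
        have hδb : δ b = θ * ε := hchar b (θ * ε) hb hmem2
        rw [hδa, hδb, ← mul_assoc, hsq θ, one_mul]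
  have inv2 : ∀ w ∈ W, ∀ i, ∃ j, w (sgnE n i) = ((δ i * δ j : ℤˣ) : ℤ) • sgnE n j := by
    intro w hw
    rw [hgen] at hw
    refine Subgroup.closure_induction ?_ ?_ ?_ ?_ hw
    · rintro r ⟨hrW, hrR⟩ i
      rcases reflection_classify hrR with ⟨a, rfl⟩ | ⟨a, b, hab, hr⟩
      · exact absurd hrW (hTnone a)
      · have hsab : ∀ ε : ℤˣ, r = swapR a b ε → True := fun _ _ => trivial
        rcases hr with rfl | rfl
        · by_cases hia : i = a
          · subst hia
            refine ⟨b, ?_⟩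
            rw [swapR_apply_left, key i b 1 hab hrW]
          · by_cases hib : i = b
            · subst hib
              refine ⟨a, ?_⟩
              rw [swapR_apply_right, mul_comm, key a i 1 hab hrW]
            · exact ⟨i, by rw [swapR_apply_other a b i 1 hia hib, hsq (δ i)]; simp⟩
        · by_cases hia : i = a
          · subst hia
            refine ⟨b, ?_⟩
            rw [swapR_apply_left, key i b (-1) hab hrW]
          · by_cases hib : i = b
            · subst hib
              refine ⟨a, ?_⟩
              rw [swapR_apply_right, mul_comm, key a i (-1) hab hrW]
            · exact ⟨i, by rw [swapR_apply_other a b i (-1) hia hib, hsq (δ i)]; simp⟩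
    · intro i
      exact ⟨i, by rw [hsq (δ i)]; simp⟩
    · intro x y hx hy ihx ihy i
      obtain ⟨j, h1⟩ := ihy i
      obtain ⟨k, h2⟩ := ihx j
      refine ⟨k, ?_⟩
      rw [mul_apply, h1, map_smul, h2, smul_smul]
      congr 1
      push_cast
      have : δ i * δ j * (δ j * δ k) = δ i * δ k := by
        rw [mul_assoc, ← mul_assoc (δ j), hsq (δ j), one_mul]
      exact_mod_cast congrArg (fun z : ℤˣ => (z : ℤ)) this
    · intro x hx ih
      rw [← hgen] at hx
      obtain ⟨π, u, rfl⟩ := w_form hsub hx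
      intro i
      obtain ⟨k, heq⟩ := ih (π⁻¹ i)
      rw [sp_apply_e, (by exact Equiv.apply_symm_apply π i : π (π⁻¹ i) = i)] at heq
      obtain ⟨rfl, hc⟩ := smul_e_inj (by exact_mod_cast (u (π⁻¹ i)).ne_zero) heq
      refine ⟨π⁻¹ i, ?_⟩
      rw [sp_inv, sp_apply_e, hc, mul_comm (δ (π⁻¹ i)) (δ i)]
  obtain ⟨w, hw, hwx⟩ := htrans (sgnE n i0) (e_mem_set i0) (-(sgnE n i0)) (neg_e_mem_set i0)
  obtain ⟨j, hj⟩ := inv2 w hw i0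
  rw [hwx] at hj
  have hj' : (-1 : ℤ) • sgnE n i0 = ((δ i0 * δ j : ℤˣ) : ℤ) • sgnE n j := by
    rw [neg_one_smul]; exact hj
  obtain ⟨rfl, hc⟩ := smul_e_inj (by norm_num) hj'
  rw [hδi0, one_mul] at hc
  simp at hc

end Final

end SgnAux

/-- If a subgroup `W` of the group of signed permutation automorphisms of `ℤⁿ` (`n ≥ 1`)
is generated by the reflections it contains and acts transitively on
`{e₁, …, eₙ, -e₁, …, -eₙ}`, then `W` is the full signed permutation group `M` or the
index-2 subgroup `M⁺` of elements with sign product `1`. -/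
theorem stmt_1 (n : ℕ) (hn : 1 ≤ n)
    (W : Subgroup ((Fin n → ℤ) ≃ₗ[ℤ] (Fin n → ℤ)))
    (hsub : ∀ f ∈ W, IsSignedPerm f)
    (hgen : W = Subgroup.closure {f | f ∈ W ∧ IsSgnReflection f})
    (htrans : ∀ x ∈ {v : Fin n → ℤ | ∃ i, v = sgnE n i ∨ v = -(sgnE n i)},
      ∀ y ∈ {v : Fin n → ℤ | ∃ i, v = sgnE n i ∨ v = -(sgnE n i)},
        ∃ w ∈ W, w x = y) :
    (W : Set ((Fin n → ℤ) ≃ₗ[ℤ] (Fin n → ℤ))) = {f | IsSignedPerm f} ∨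
      (W : Set ((Fin n → ℤ) ≃ₗ[ℤ] (Fin n → ℤ))) = {f | IsSignedPermPos f} := by
  have hn0 : 0 < n := hn
  by_cases hTex : ∃ a, SgnAux.swapR a a (-1) ∈ W
  · left
    exact SgnAux.caseA hsub hgen htrans hTex
  · push_neg at hTex
    by_cases hF : ∃ a b : Fin n, a ≠ b ∧ SgnAux.swapR a b 1 ∈ W ∧ SgnAux.swapR a b (-1) ∈ W
    · right
      obtain ⟨a, b, hab, h1, h2⟩ := hF
      exact SgnAux.caseB hn0 hsub hgen hTex (SgnAux.full_everywhere hsub hgen htrans hab h1 h2)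
    · exact absurd (SgnAux.caseB_impossible hn0 hsub hgen htrans hTex
        (fun a b hab hboth => hF ⟨a, b, hab, hboth.1, hboth.2⟩)) not_false
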